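/- Let P, Q be Pareto sets with integer coordinates, A, B the derived monotone arrays as in the reduction, and C their min-plus convolution. Then the set S* = {(k, C[k]) : k = 0 or C[k] < C[k-1]} equals the Pareto sum of P and Q. -/
import Mathlib


/-- With the reduction arrays `A, B` derived from Pareto sets `P, Q`
and `C` their min-plus convolution, the set `S* = {(k, C[k]) : k = 0 or C[k] < C[k-1]}`
equals the Pareto sum of `P` and `Q`. -/
theorem pruned_conv_eq_pareto_sum (W : ℤ) (hW : 0 ≤ W)
    (P Q : Set (ℤ × ℤ))
    (hPareto_P : ∀ a ∈ P, ∀ b ∈ P, ¬(a.1 ≤ b.1 ∧ a.2 ≤ b.2 ∧ a ≠ b))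
    (hPareto_Q : ∀ a ∈ Q, ∀ b ∈ Q, ¬(a.1 ≤ b.1 ∧ a.2 ≤ b.2 ∧ a ≠ b))
    (hPW : ∀ p ∈ P, 0 ≤ p.1 ∧ p.1 ≤ W ∧ 0 ≤ p.2 ∧ p.2 ≤ W)
    (hQW : ∀ q ∈ Q, 0 ≤ q.1 ∧ q.1 ≤ W ∧ 0 ≤ q.2 ∧ q.2 ≤ W)
    (hP0 : ∃ p ∈ P, p.1 = 0) (hQ0 : ∃ q ∈ Q, q.1 = 0)
    (A B : ℤ → ℤ)
    (hA : ∀ i : ℤ, 0 ≤ i → i ≤ W →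
      (((∃ p ∈ P, p.1 ≤ i) →
        (∃ p ∈ P, p.1 ≤ i ∧ A i = p.2) ∧ (∀ p ∈ P, p.1 ≤ i → A i ≤ p.2)) ∧
       ((∀ p ∈ P, ¬ p.1 ≤ i) → A i = W + 1)))
    (hB : ∀ i : ℤ, 0 ≤ i → i ≤ W →
      (((∃ q ∈ Q, q.1 ≤ i) →
        (∃ q ∈ Q, q.1 ≤ i ∧ B i = q.2) ∧ (∀ q ∈ Q, q.1 ≤ i → B i ≤ q.2)) ∧
       ((∀ q ∈ Q, ¬ q.1 ≤ i) → B i = W + 1)))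
    (C : ℤ → ℤ)
    (hC : ∀ k : ℤ, 0 ≤ k → k ≤ 2 * W →
      IsLeast {v : ℤ | ∃ i j : ℤ, 0 ≤ i ∧ i ≤ W ∧ 0 ≤ j ∧ j ≤ W ∧ i + j = k ∧ v = A i + B j}
        (C k)) :
    {s : ℤ × ℤ | ∃ k : ℤ, 0 ≤ k ∧ k ≤ 2 * W ∧ s = (k, C k) ∧ (k = 0 ∨ C k < C (k - 1))} =
    {s : ℤ × ℤ | (∃ p ∈ P, ∃ q ∈ Q, s = p + q) ∧
      ∀ p ∈ P, ∀ q ∈ Q, ¬((p + q).1 ≤ s.1 ∧ (p + q).2 ≤ s.2 ∧ p + q ≠ s)} := by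
  obtain ⟨p0, hp0P, hp0x⟩ := hP0
  obtain ⟨q0, hq0P, hq0x⟩ := hQ0
  -- basic A/B facts
  have hAle : ∀ i : ℤ, 0 ≤ i → i ≤ W → ∀ p ∈ P, p.1 ≤ i → A i ≤ p.2 := by
    intro i hi0 hiW p hp hpi
    exact ((hA i hi0 hiW).1 ⟨p, hp, hpi⟩).2 p hp hpi
  have hAex : ∀ i : ℤ, 0 ≤ i → i ≤ W → ∃ p ∈ P, p.1 ≤ i ∧ A i = p.2 := by
    intro i hi0 hiW
    exact ((hA i hi0 hiW).1 ⟨p0, hp0P, by omega⟩).1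
  have hBle : ∀ j : ℤ, 0 ≤ j → j ≤ W → ∀ q ∈ Q, q.1 ≤ j → B j ≤ q.2 := by
    intro j hj0 hjW q hq hqj
    exact ((hB j hj0 hjW).1 ⟨q, hq, hqj⟩).2 q hq hqj
  have hBex : ∀ j : ℤ, 0 ≤ j → j ≤ W → ∃ q ∈ Q, q.1 ≤ j ∧ B j = q.2 := by
    intro j hj0 hjW
    exact ((hB j hj0 hjW).1 ⟨q0, hq0P, by omega⟩).1
  -- C k is at most p.2 + q.2 whenever p.1 + q.1 ≤ k
  have hCle : ∀ k : ℤ, 0 ≤ k → k ≤ 2 * W → ∀ p ∈ P, ∀ q ∈ Q, p.1 + q.1 ≤ k →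
      C k ≤ p.2 + q.2 := by
    intro k hk0 hkW p hp q hq hpqk
    obtain ⟨hp1, hp2, hp3, hp4⟩ := hPW p hp
    obtain ⟨hq1, hq2, hq3, hq4⟩ := hQW q hq
    set i : ℤ := max p.1 (k - W) with hi
    set j : ℤ := k - i with hj
    have hi0 : 0 ≤ i := by omega
    have hiW : i ≤ W := by omega
    have hj0 : 0 ≤ j := by omega
    have hjW : j ≤ W := by omega
    have hqle : q.1 ≤ j := by omega
    have hple : p.1 ≤ i := le_max_left _ _
    have h1 : C k ≤ A i + B j :=
      (hC k hk0 hkW).2 ⟨i, j, hi0, hiW, hj0, hjW, by omega, rfl⟩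
    have h2 : A i ≤ p.2 := hAle i hi0 hiW p hp hple
    have h3 : B j ≤ q.2 := hBle j hj0 hjW q hq hqle
    omega
  -- C k is achieved by some pair
  have hCex : ∀ k : ℤ, 0 ≤ k → k ≤ 2 * W → ∃ p ∈ P, ∃ q ∈ Q,
      p.1 + q.1 ≤ k ∧ C k = p.2 + q.2 := by
    intro k hk0 hkW
    obtain ⟨i, j, hi0, hiW, hj0, hjW, hij, hval⟩ := (hC k hk0 hkW).1
    obtain ⟨p, hp, hpi, hAi⟩ := hAex i hi0 hiW
    obtain ⟨q, hq, hqj, hBj⟩ := hBex j hj0 hjW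
    exact ⟨p, hp, q, hq, by omega, by omega⟩
  ext s
  simp only [Set.mem_setOf_eq]
  constructor
  · rintro ⟨k, hk0, hkW, rfl, hdisj⟩
    obtain ⟨p, hp, q, hq, hpqk, hCk⟩ := hCex k hk0 hkW
    obtain ⟨hp1, hp2, hp3, hp4⟩ := hPW p hp
    obtain ⟨hq1, hq2, hq3, hq4⟩ := hQW q hq
    have hkeq : p.1 + q.1 = k := by
      by_contra hne
      have hle : p.1 + q.1 ≤ k - 1 := by omega
      have hk1 : (1 : ℤ) ≤ k := by omega
      have h := hCle (k - 1) (by omega) (by omega) p hp q hq hle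
      rcases hdisj with h0 | hlt
      · omega
      · omega
    constructor
    · exact ⟨p, hp, q, hq, by ext <;> simp [Prod.fst_add, Prod.snd_add] <;> omega⟩
    · rintro p' hp' q' hq' ⟨h1, h2, h3⟩
      obtain ⟨hp'1, hp'2, hp'3, hp'4⟩ := hPW p' hp'
      obtain ⟨hq'1, hq'2, hq'3, hq'4⟩ := hQW q' hq'
      simp only [Prod.fst_add, Prod.snd_add] at h1 h2
      have hk'le : p'.1 + q'.1 ≤ k := h1
      have hge : C k ≤ p'.2 + q'.2 := hCle k hk0 hkW p' hp' q' hq' hk'le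
      have hkeq' : p'.1 + q'.1 = k := by
        by_contra hne
        have hle : p'.1 + q'.1 ≤ k - 1 := by omega
        have h := hCle (k - 1) (by omega) (by omega) p' hp' q' hq' hle
        rcases hdisj with h0 | hlt
        · omega
        · omega
      exact h3 (by ext <;> simp [Prod.fst_add, Prod.snd_add] <;> omega)
  · rintro ⟨⟨p, hp, q, hq, rfl⟩, hopt⟩
    obtain ⟨hp1, hp2, hp3, hp4⟩ := hPW p hp
    obtain ⟨hq1, hq2, hq3, hq4⟩ := hQW q hq
    set k : ℤ := p.1 + q.1 with hk
    have hk0 : 0 ≤ k := by omega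
    have hkW : k ≤ 2 * W := by omega
    have hCub : C k ≤ p.2 + q.2 := hCle k hk0 hkW p hp q hq (by omega)
    -- C k is attained and forced to equal s
    obtain ⟨p', hp', q', hq', hpqk', hCk⟩ := hCex k hk0 hkW
    have heq : p' + q' = p + q := by
      by_contra hne
      exact hopt p' hp' q' hq'
        ⟨by simp only [Prod.fst_add]; omega,
         by simp only [Prod.snd_add]; omega, hne⟩
    have hCval : C k = p.2 + q.2 := by
      have := congrArg Prod.snd heq
      simp only [Prod.snd_add] at this
      omega
    refine ⟨k, hk0, hkW, by ext <;> simp [Prod.fst_add, Prod.snd_add] <;> omega, ?_⟩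
    by_cases hk00 : k = 0
    · exact Or.inl hk00
    · right
      by_contra hle
      push_neg at hle
      obtain ⟨p'', hp'', q'', hq'', hpqk'', hCk''⟩ := hCex (k - 1) (by omega) (by omega)
      refine hopt p'' hp'' q'' hq''
        ⟨by simp only [Prod.fst_add]; omega,
         by simp only [Prod.snd_add]; omega, ?_⟩
      intro hcontra
      have := congrArg Prod.fst hcontra
      simp only [Prod.fst_add] at this
      omega
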